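/- arXiv:math/0003118 — 3 statements merged into one kernel-verified Lean document; each statement's English description precedes it below -/
import Mathlib

section
/- Let κ be regular uncountable and λ > κ an ordinal. Then λ weakly reflects at κ if and only if the cardinal |λ| weakly reflects at κ. -/
open Set Cardinal

/-- `C` is a closed unbounded (club) subset of the ordinal `d`. -/
def ClubIn (C : Set Ordinal) (d : Ordinal) : Prop :=
  C ⊆ Set.Iio d ∧ (∀ b < d, ∃ x ∈ C, b ≤ x) ∧
  ∀ b < d, (C ∩ Set.Iio b).Nonempty → sSup (C ∩ Set.Iio b) = b → b ∈ C

/-- `S` is a stationary subset of the ordinal `d`. -/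
def StatIn (S : Set Ordinal) (d : Ordinal) : Prop :=
  S ⊆ Set.Iio d ∧ ∀ C, ClubIn C d → (S ∩ C).Nonempty

/-- `l` weakly reflects at `k`. -/
def WRefl (l : Ordinal) (k : Cardinal) : Prop :=
  ∀ f : Ordinal → Ordinal, (∀ a < l, f a < k.ord) →
    ∃ d < l, d.cof = k ∧ ∀ e, ClubIn e d → ¬ StrictMonoOn f e

/-- `f` witnesses strong non-reflection of `l` at `k`. -/
def SNRw (f : Ordinal → Ordinal) (l : Ordinal) (k : Cardinal) : Prop :=
  (∀ a < l, f a < k.ord) ∧ ∀ d < l, d.cof = k → ∃ e, ClubIn e d ∧ StrictMonoOn f e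

/-- Strong non-reflection of `l` at `k`. -/
def SNR (l : Ordinal) (k : Cardinal) : Prop := ∃ f, SNRw f l k

open Ordinal

lemma wrefl_iff_not_snr {l : Ordinal} {k : Cardinal} : WRefl l k ↔ ¬ SNR l k := by
  unfold WRefl SNR SNRw
  push_neg
  rfl

lemma snrw_mono {f : Ordinal → Ordinal} {l l' : Ordinal} {k : Cardinal}
    (h : SNRw f l k) (hle : l' ≤ l) : SNRw f l' k :=
  ⟨fun a ha => h.1 a (ha.trans_le hle), fun d hd => h.2 d (hd.trans_le hle)⟩

lemma snr_mono {l l' : Ordinal} {k : Cardinal} (h : SNR l k) (hle : l' ≤ l) : SNR l' k :=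
  ⟨h.choose, snrw_mono h.choose_spec hle⟩

lemma clubIn_tail {C : Set Ordinal} {d : Ordinal} (hd : Order.IsSuccLimit d) (hC : ClubIn C d)
    {s : Ordinal} (hs : s < d) : ClubIn (C ∩ Set.Ioi s) d := by
  obtain ⟨h1, h2, h3⟩ := hC
  refine ⟨fun x hx => h1 hx.1, fun b hb => ?_, fun b hb hne hsup => ?_⟩
  · obtain ⟨x, hx, hbx⟩ := h2 (max b (s+1)) (max_lt hb (hd.succ_lt hs))
    exact ⟨x, ⟨hx, lt_of_lt_of_le (lt_of_lt_of_le (Order.lt_succ s) (le_max_right _ _)) hbx⟩,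
      (le_max_left _ _).trans hbx⟩
  · obtain ⟨x, hx⟩ := id hne
    have hsub : C ∩ Set.Ioi s ∩ Set.Iio b ⊆ C ∩ Set.Iio b := fun y hy => ⟨hy.1.1, hy.2⟩
    have hxb : s < b := lt_of_lt_of_le hx.1.2 (le_of_lt hx.2)
    refine ⟨h3 b hb ⟨x, hsub hx⟩ ?_, hxb⟩
    apply le_antisymm
    · exact csSup_le ⟨x, hsub hx⟩ (fun y hy => le_of_lt hy.2)
    · exact le_trans hsup.ge (csSup_le_csSup (bddAbove_Iio.mono inter_subset_right) ⟨x, hx⟩ hsub)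

lemma clubIn_Iio {j : Ordinal} (hj : Order.IsSuccLimit j) : ClubIn (Set.Iio j) j :=
  ⟨fun _ h => h, fun b hb => ⟨b, hb, le_rfl⟩, fun b hb _ _ => hb⟩

lemma exists_normal_climb (δ : Ordinal) (hδ : Order.IsSuccLimit δ) :
    ∃ B : Ordinal → Ordinal, Order.IsNormal B ∧ (∀ i < (cof δ).ord, B i < δ) ∧ B (cof δ).ord = δ := by
  classical
  set θo := (cof δ).ord with hθo
  have hθlim : Order.IsSuccLimit θo := isSuccLimit_ord (aleph0_le_cof.2 hδ)
  obtain ⟨f, hf⟩ := exists_fundamental_sequence δ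
  set f' : Ordinal → Ordinal := fun i => if h : i < θo then f i h else 0 with hf'
  have hf'lt : ∀ i < θo, f' i < δ := by
    intro i hi
    simp only [hf', dif_pos hi]
    rw [← hf.blsub_eq]
    exact lt_blsub _ i hi
  have hf'mono : ∀ {i j}, i < j → j < θo → f' i < f' j := by
    intro i j hij hj
    have hi : i < θo := hij.trans hj
    simp only [hf', dif_pos hi, dif_pos hj]
    exact hf.strict_mono _ _ hij
  set b : Ordinal → Ordinal := fun i => if Order.IsSuccLimit i then sSup (f' '' Set.Iio i) else f' i with hb
  have hb_le_f' : ∀ i < θo, b i ≤ f' i := by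
    intro i hi
    by_cases h : Order.IsSuccLimit i
    · simp only [hb, if_pos h]
      refine csSup_le (⟨f' 0, 0, h.pos, rfl⟩) ?_
      rintro y ⟨j, hj, rfl⟩
      exact (hf'mono hj hi).le
    · simp only [hb, if_neg h, le_refl]
  have hbmono : ∀ {i j}, i < j → j < θo → b i < b j := by
    intro i j hij hj
    by_cases h : Order.IsSuccLimit j
    · have h1 : b i ≤ f' i := hb_le_f' i (hij.trans hj)
      have h2 : f' i < f' (i+1) := hf'mono (lt_add_one i) ((h.succ_lt hij).trans hj)
      have h3 : f' (i+1) ≤ b j := by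
        simp only [hb, if_pos h]
        exact le_csSup Ordinal.bddAbove_of_small ⟨i+1, h.succ_lt hij, rfl⟩
      exact (h1.trans_lt h2).trans_le h3
    · simp only [hb, if_neg h]
      exact (hb_le_f' i (hij.trans hj)).trans_lt (hf'mono hij hj)
  have hblt : ∀ i < θo, b i < δ := fun i hi => (hb_le_f' i hi).trans_lt (hf'lt i hi)
  have hbcont : ∀ o, Order.IsSuccLimit o → o < θo → ∀ a, (∀ j < o, b j ≤ a) → b o ≤ a := by
    intro o ho hoθ a ha
    simp only [hb, if_pos ho]
    refine csSup_le ⟨f' 0, 0, ho.pos, rfl⟩ ?_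
    rintro y ⟨j, hj, rfl⟩
    have hj1 : j + 1 < o := ho.succ_lt hj
    have : f' j ≤ b (j+1) := by
      have : ¬ Order.IsSuccLimit (j+1) := fun h => (h.succ_lt (lt_add_one j)).false
      simp only [hb, if_neg this]
      exact (hf'mono (lt_add_one j) (hj1.trans hoθ)).le
    exact this.trans (ha _ hj1)
  have hsupθ : ∀ a, (∀ j < θo, b j ≤ a) → δ ≤ a := by
    intro a ha
    refine le_of_forall_lt fun x hx => ?_
    rw [← hf.blsub_eq, lt_blsub_iff] at hx
    obtain ⟨i, hi, hxi⟩ := hx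
    have hi1 : i + 1 < θo := hθlim.succ_lt hi
    have h1 : f' i < b (i+1) := by
      have hnl : ¬ Order.IsSuccLimit (i+1) := fun h => (h.succ_lt (lt_add_one i)).false
      simp only [hb, if_neg hnl]
      exact hf'mono (lt_add_one i) hi1
    have : f' i = f i hi := by simp only [hf']; exact dif_pos hi
    exact lt_of_le_of_lt (this ▸ hxi) (h1.trans_le (ha _ hi1))
  set B : Ordinal → Ordinal := fun i => if i < θo then b i else δ + (i - θo) with hB
  have hBeq : ∀ i, B i = if i < θo then b i else δ + (i - θo) := fun i => rfl
  refine ⟨B, ?_, ?_, ?_⟩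
  · rw [Order.isNormal_iff]
    constructor
    · intro i j hij
      rw [hBeq, hBeq]
      rcases lt_or_ge j θo with hj | hj
      · rw [if_pos (hij.trans hj), if_pos hj]; exact hbmono hij hj
      · rcases lt_or_ge i θo with hi | hi
        · rw [if_pos hi, if_neg (not_lt.2 hj)]
          exact (hblt i hi).trans_le le_self_add
        · rw [if_neg (not_lt.2 hi), if_neg (not_lt.2 hj)]
          apply add_lt_add_right
          rw [← add_lt_add_iff_left θo, Ordinal.add_sub_cancel_of_le hi,
            Ordinal.add_sub_cancel_of_le hj]
          exact hij
    · intro o ho a ha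
      rw [hBeq]
      rcases lt_trichotomy o θo with ho' | ho' | ho'
      · rw [if_pos ho']
        refine hbcont o ho ho' a fun j hj => ?_
        have := ha j hj
        rwa [hBeq, if_pos (hj.trans ho')] at this
      · subst ho'
        rw [if_neg (lt_irrefl _), Ordinal.sub_self, add_zero]
        refine hsupθ a fun j hj => ?_
        have := ha j hj
        rwa [hBeq, if_pos hj] at this
      · rw [if_neg (not_lt.2 ho'.le)]
        set ρ := o - θo with hρ
        have hoρ : θo + ρ = o := Ordinal.add_sub_cancel_of_le ho'.le
        have hρ0 : ρ ≠ 0 := by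
          intro h; rw [h, add_zero] at hoρ; exact (lt_irrefl _ (hoρ ▸ ho')).elim
        have hρlim : Order.IsSuccLimit ρ := by
          rcases zero_or_succ_or_isSuccLimit ρ with h | ⟨σ, h⟩ | h
          · exact absurd h hρ0
          · exfalso
            rw [← h, add_succ] at hoρ
            have h2 : θo + σ < o := hoρ ▸ Order.lt_succ _
            exact absurd hoρ (ho.succ_lt h2).ne
          · exact h
        rw [show δ + (o - θo) = (fun x => δ + x) ρ from rfl, (isNormal_add_right δ).le_iff_forall_le hρlim]
        intro ξ hξ
        show δ + ξ ≤ a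
        have h1 : θo + ξ < o := by
          rw [← hoρ]; exact add_lt_add_right hξ θo
        have := ha (θo + ξ) h1
        rwa [hBeq, if_neg (not_lt.2 (le_self_add : θo ≤ θo + ξ)), Ordinal.add_sub_cancel] at this
  · intro i hi; rw [hBeq, if_pos hi]; exact hblt i hi
  · rw [hBeq, if_neg (lt_irrefl _), Ordinal.sub_self, add_zero]

lemma clubIn_image {B : Ordinal → Ordinal} (hB : Order.IsNormal B) {e : Set Ordinal} {j : Ordinal}
    (hj : Order.IsSuccLimit j) (he : ClubIn e j) : ClubIn (B '' e) (B j) := by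
  obtain ⟨he1, he2, he3⟩ := he
  refine ⟨?_, ?_, ?_⟩
  · rintro x ⟨i, hi, rfl⟩
    exact hB.strictMono (he1 hi)
  · intro c hc
    have : ¬ B j ≤ c := not_le.2 hc
    rw [hB.le_iff_forall_le hj] at this
    push_neg at this
    obtain ⟨i, hij, hci⟩ := this
    obtain ⟨i', hi'e, hii'⟩ := he2 i hij
    exact ⟨B i', ⟨i', hi'e, rfl⟩, (hci.le.trans (hB.monotone hii'))⟩
  · intro c hc hne hsup
    set Jset : Set Ordinal := {i | c ≤ B i} with hJ
    have hJne : Jset.Nonempty := ⟨j, hc.le⟩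
    set i₀ := sInf Jset with hi₀
    have hi₀mem : c ≤ B i₀ := csInf_mem hJne
    have hlt : ∀ i, i < i₀ → B i < c := by
      intro i hi
      by_contra h
      exact (csInf_le' (show i ∈ Jset from not_lt.1 h)).not_gt hi
    have hidx : ∀ x ∈ B '' e ∩ Set.Iio c, ∃ i, i ∈ e ∧ i < i₀ ∧ B i = x := by
      rintro x ⟨⟨i, hie, rfl⟩, hxc⟩
      refine ⟨i, hie, ?_, rfl⟩
      by_contra h
      exact ((hi₀mem.trans (hB.monotone (not_lt.1 h))).not_gt hxc).elim
    rcases zero_or_succ_or_isSuccLimit i₀ with h0 | ⟨i', hsucc⟩ | hlim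
    · obtain ⟨x, hx⟩ := id hne
      obtain ⟨i, _, hii₀, _⟩ := hidx x hx
      rw [h0] at hii₀
      exact absurd hii₀ (zero_le.not_gt)
    · exfalso
      have hub : ∀ x ∈ B '' e ∩ Set.Iio c, x ≤ B i' := by
        intro x hx
        obtain ⟨i, _, hii₀, rfl⟩ := hidx x hx
        rw [← hsucc] at hii₀
        exact hB.monotone (Order.lt_succ_iff.1 hii₀)
      have h1 : c ≤ B i' := hsup ▸ csSup_le hne hub
      have h2 : B i' < c := hlt i' (hsucc ▸ Order.lt_succ i')
      exact h1.not_gt h2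
    · have hBi₀ : B i₀ = c :=
        le_antisymm ((hB.le_iff_forall_le hlim).2 fun b hb => (hlt b hb).le) hi₀mem
      have hi₀j : i₀ < j := hB.strictMono.lt_iff_lt.1 (hBi₀ ▸ hc)
      obtain ⟨x, hx⟩ := id hne
      obtain ⟨i1, hi1e, hi1lt, _⟩ := hidx x hx
      have hne' : (e ∩ Set.Iio i₀).Nonempty := ⟨i1, hi1e, hi1lt⟩
      have hsup' : sSup (e ∩ Set.Iio i₀) = i₀ := by
        refine le_antisymm (csSup_le hne' fun y hy => hy.2.le) ?_
        by_contra h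
        push_neg at h
        set σ := sSup (e ∩ Set.Iio i₀) with hσ
        have hub : ∀ x ∈ B '' e ∩ Set.Iio c, x ≤ B σ := by
          intro x hx
          obtain ⟨i, hie, hii₀, rfl⟩ := hidx x hx
          exact hB.monotone (le_csSup (bddAbove_Iio.mono inter_subset_right) ⟨hie, hii₀⟩)
        have h1 : c ≤ B σ := hsup ▸ csSup_le hne hub
        exact h1.not_gt (hlt σ h)
      exact ⟨i₀, he3 i₀ hi₀j hne' hsup', hBi₀⟩

lemma limit_index {B : Ordinal → Ordinal} (hB : Order.IsNormal B) {j₀ d : Ordinal}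
    (hj₀ : Order.IsSuccLimit j₀) (hd : d < B j₀)
    (hne : ((B '' Set.Iio j₀) ∩ Set.Iio d).Nonempty)
    (hsup : sSup ((B '' Set.Iio j₀) ∩ Set.Iio d) = d) :
    ∃ j < j₀, Order.IsSuccLimit j ∧ B j = d := by
  have hclub : ClubIn (B '' Set.Iio j₀) (B j₀) := clubIn_image hB hj₀ (clubIn_Iio hj₀)
  have hdE : d ∈ B '' Set.Iio j₀ := hclub.2.2 d hd hne hsup
  obtain ⟨j, hjj₀, rfl⟩ := hdE
  refine ⟨j, hjj₀, ?_, rfl⟩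
  rcases zero_or_succ_or_isSuccLimit j with h0 | ⟨j', hsucc⟩ | hlim
  · obtain ⟨x, ⟨i, _, rfl⟩, hxd⟩ := id hne
    rw [h0] at hxd
    exact absurd (hB.strictMono.lt_iff_lt.1 hxd) (zero_le.not_gt)
  · exfalso
    have hub : ∀ x ∈ (B '' Set.Iio j₀) ∩ Set.Iio (B j), x ≤ B j' := by
      rintro x ⟨⟨i, _, rfl⟩, hxd⟩
      have : i < j := hB.strictMono.lt_iff_lt.1 hxd
      rw [← hsucc] at this
      exact hB.monotone (Order.lt_succ_iff.1 this)
    have h1 : B j ≤ B j' := hsup ▸ csSup_le hne hub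
    have h2 : B j' < B j := hB.strictMono (hsucc ▸ Order.lt_succ j')
    exact h1.not_gt h2
  · exact hlim

lemma normal_inv {B : Ordinal → Ordinal} (hB : Order.IsNormal B) (i : Ordinal) :
    sInf {i' | B i' = B i} = i := by
  have : {i' | B i' = B i} = {i} := by
    ext i'
    simp [Set.mem_setOf_eq, hB.strictMono.injective.eq_iff]
  rw [this, csInf_singleton]

lemma main_ind (k : Cardinal) (hk : k.IsRegular) (ν : Ordinal) (hν : SNR ν k) :
    ∀ l : Ordinal, l.card ≤ ν.card → SNR l k := by
  intro l
  refine Ordinal.induction (p := fun l => l.card ≤ ν.card → SNR l k) l ?_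
  clear l
  intro l IH hcard
  classical
  rcases le_or_gt l ν with hle | hlt
  · exact snr_mono hν hle
  rcases zero_or_succ_or_isSuccLimit l with rfl | ⟨β, rfl⟩ | hlim
  · exact absurd hlt (zero_le.not_gt)
  · -- successor case
    have hβcard : β.card ≤ ν.card := (Ordinal.card_le_card (Order.le_succ β)).trans hcard
    obtain ⟨f, hf⟩ := IH β (Order.lt_succ β) hβcard
    by_cases hcof : β.cof = k
    · -- cof β = k : need a club in β on which the witness is increasing
      have hβlim : Order.IsSuccLimit β := aleph0_le_cof.1 (hcof ▸ hk.aleph0_le)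
      obtain ⟨B, hB, hBlt, hBtop⟩ := exists_normal_climb β hβlim
      set θo := (cof β).ord with hθodef
      have hθok : θo = k.ord := by rw [hθodef, hcof]
      have hθolim : Order.IsSuccLimit θo := isSuccLimit_ord (hcof ▸ hk.aleph0_le)
      set E : Set Ordinal := B '' Set.Iio θo with hE
      refine ⟨fun x => if x ∈ E then sInf {i' | B i' = x} else if x < β then f x else 0, ?_, ?_⟩
      · intro a _
        beta_reduce
        by_cases haE : a ∈ E
        · rw [if_pos haE]
          obtain ⟨i, hi, rfl⟩ := haE
          rw [normal_inv hB]
          exact hθok ▸ hi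
        · rw [if_neg haE]
          by_cases haβ : a < β
          · rw [if_pos haβ]; exact hf.1 a haβ
          · rw [if_neg haβ]; exact hk.ord_pos
      · intro d hd hdcof
        have hdlim : Order.IsSuccLimit d := aleph0_le_cof.1 (hdcof ▸ hk.aleph0_le)
        rcases lt_or_eq_of_le (Order.lt_succ_iff.1 hd) with hdβ | rfl
        · by_cases hlp : (E ∩ Set.Iio d).Nonempty ∧ sSup (E ∩ Set.Iio d) = d
          · exfalso
            obtain ⟨j, hjθ, hjlim, hBj⟩ := limit_index hB hθolim
              (show d < B θo by rw [hBtop]; exact hdβ) hlp.1 hlp.2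
            have h1 : cof d = cof j := by rw [← hBj]; exact cof_map_of_isNormal hB hjlim
            have h2 : j.card < k := Cardinal.lt_ord.1 (hθok ▸ hjθ)
            have h3 : cof d < k := h1 ▸ lt_of_le_of_lt (cof_le_card j) h2
            exact h3.ne hdcof
          · set s : Ordinal := if h : (E ∩ Set.Iio d).Nonempty then sSup (E ∩ Set.Iio d) else 0
              with hs
            have hsd : s < d := by
              rw [hs]
              split_ifs with h
              · refine lt_of_le_of_ne (csSup_le h fun y hy => hy.2.le) ?_
                intro heq
                exact hlp ⟨h, heq⟩
              · exact hdlim.pos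
            have hEs : ∀ y ∈ E, y < d → y ≤ s := by
              intro y hy hyd
              rw [hs]; split_ifs with h
              · exact le_csSup (bddAbove_Iio.mono inter_subset_right) ⟨hy, hyd⟩
              · exact absurd ⟨y, hy, hyd⟩ h
            obtain ⟨e, he, hmono⟩ := hf.2 d hdβ hdcof
            refine ⟨e ∩ Set.Ioi s, clubIn_tail hdlim he hsd, ?_⟩
            intro x hx y hy hxy
            have hxd : x < d := he.1 hx.1
            have hyd : y < d := he.1 hy.1
            have hxE : x ∉ E := fun h => absurd hx.2 (hEs x h hxd).not_gt
            have hyE : y ∉ E := fun h => absurd hy.2 (hEs y h hyd).not_gt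
            beta_reduce
            rw [if_neg hxE, if_neg hyE, if_pos (hxd.trans hdβ), if_pos (hyd.trans hdβ)]
            exact hmono hx.1 hy.1 hxy
        · -- d = β
          refine ⟨E, ?_, ?_⟩
          · have := clubIn_image hB hθolim (clubIn_Iio hθolim)
            rwa [hBtop] at this
          · rintro x ⟨i, hi, rfl⟩ y ⟨i', hi', rfl⟩ hxy
            beta_reduce
            rw [if_pos (show B i ∈ E from ⟨i, hi, rfl⟩),
              if_pos (show B i' ∈ E from ⟨i', hi', rfl⟩), normal_inv hB, normal_inv hB]
            exact hB.strictMono.lt_iff_lt.1 hxy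
    · -- cof β ≠ k : just extend the witness by 0
      refine ⟨fun x => if x < β then f x else 0, ?_, ?_⟩
      · intro a _
        beta_reduce
        split_ifs with h
        · exact hf.1 a h
        · exact hk.ord_pos
      · intro d hd hdcof
        have hdβ : d < β :=
          lt_of_le_of_ne (Order.lt_succ_iff.1 hd) (fun h => hcof (h ▸ hdcof))
        obtain ⟨e, he, hmono⟩ := hf.2 d hdβ hdcof
        refine ⟨e, he, ?_⟩
        intro x hx y hy hxy
        beta_reduce
        rw [if_pos ((he.1 hx).trans hdβ), if_pos ((he.1 hy).trans hdβ)]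
        exact hmono hx hy hxy
  · -- limit case
    set θo := (cof l).ord with hθodef
    have hθolt : θo < l := by
      calc θo ≤ l.card.ord := ord_le_ord.2 (cof_le_card l)
        _ ≤ ν.card.ord := ord_le_ord.2 hcard
        _ ≤ ν := ord_card_le ν
        _ < l := hlt
    have hθolim : Order.IsSuccLimit θo := isSuccLimit_ord (aleph0_le_cof.2 hlim)
    obtain ⟨g, hg⟩ := IH θo hθolt (by rw [card_ord]; exact (cof_le_card l).trans hcard)
    obtain ⟨B, hB, hBlt, hBtop⟩ := exists_normal_climb l hlim
    set E : Set Ordinal := B '' Set.Iio θo with hE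
    have hEclub : ClubIn E l := by
      have := clubIn_image hB hθolim (clubIn_Iio hθolim)
      rwa [hBtop] at this
    have hFex : ∀ y : Ordinal, ∃ fy : Ordinal → Ordinal, y < l → SNRw fy (y+1) k := by
      intro y
      by_cases h : y < l
      · have h1 : y + 1 < l := by rw [Ordinal.add_one_eq_succ]; exact hlim.succ_lt h
        have h2 : (y+1).card ≤ ν.card := (Ordinal.card_le_card h1.le).trans hcard
        obtain ⟨fy, hfy⟩ := IH (y+1) h1 h2
        exact ⟨fy, fun _ => hfy⟩
      · exact ⟨fun _ => 0, fun h' => absurd h' h⟩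
    choose F hF using hFex
    have hu : ∀ x < l, sInf {y | y ∈ E ∧ x < y} ∈ E ∧ x < sInf {y | y ∈ E ∧ x < y} := by
      intro x hx
      have h1 : x + 1 < l := by rw [Ordinal.add_one_eq_succ]; exact hlim.succ_lt hx
      obtain ⟨y, hyE, hxy⟩ := hEclub.2.1 (x+1) h1
      have hne : {y | y ∈ E ∧ x < y}.Nonempty := ⟨y, hyE, lt_of_lt_of_le (lt_add_one x) hxy⟩
      exact csInf_mem hne
    refine ⟨fun x => if x ∈ E then g (sInf {i' | B i' = x})
      else F (sInf {y | y ∈ E ∧ x < y}) x, ?_, ?_⟩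
    · intro a ha
      beta_reduce
      by_cases haE : a ∈ E
      · rw [if_pos haE]
        obtain ⟨i, hi, rfl⟩ := haE
        rw [normal_inv hB]
        exact hg.1 i hi
      · rw [if_neg haE]
        obtain ⟨huE, hau⟩ := hu a ha
        have hul : sInf {y | y ∈ E ∧ a < y} < l := hEclub.1 huE
        refine (hF _ hul).1 a ?_
        rw [Ordinal.add_one_eq_succ]
        exact Order.lt_succ_iff.2 hau.le
    · intro d hd hdcof
      have hdlim : Order.IsSuccLimit d := aleph0_le_cof.1 (hdcof ▸ hk.aleph0_le)
      by_cases hlp : (E ∩ Set.Iio d).Nonempty ∧ sSup (E ∩ Set.Iio d) = d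
      · obtain ⟨j, hjθ, hjlim, hBj⟩ := limit_index hB hθolim
          (show d < B θo by rw [hBtop]; exact hd) hlp.1 hlp.2
        have hjcof : j.cof = k := by rw [← hdcof, ← hBj, cof_map_of_isNormal hB hjlim]
        obtain ⟨e, he, hmono⟩ := hg.2 j hjθ hjcof
        refine ⟨B '' e, ?_, ?_⟩
        · have := clubIn_image hB hjlim he
          rwa [hBj] at this
        · rintro x ⟨i, hie, rfl⟩ y ⟨i', hi'e, rfl⟩ hxy
          have hiθ : i < θo := (he.1 hie).trans hjθ
          have hi'θ : i' < θo := (he.1 hi'e).trans hjθ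
          beta_reduce
          rw [if_pos (show B i ∈ E from ⟨i, hiθ, rfl⟩),
            if_pos (show B i' ∈ E from ⟨i', hi'θ, rfl⟩), normal_inv hB, normal_inv hB]
          exact hmono hie hi'e (hB.strictMono.lt_iff_lt.1 hxy)
      · set s : Ordinal := if h : (E ∩ Set.Iio d).Nonempty then sSup (E ∩ Set.Iio d) else 0
          with hs
        have hsd : s < d := by
          rw [hs]
          split_ifs with h
          · refine lt_of_le_of_ne (csSup_le h fun y hy => hy.2.le) ?_
            intro heq
            exact hlp ⟨h, heq⟩
          · exact hdlim.pos
        have hEs : ∀ y ∈ E, y < d → y ≤ s := by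
          intro y hy hyd
          rw [hs]; split_ifs with h
          · exact le_csSup (bddAbove_Iio.mono inter_subset_right) ⟨hy, hyd⟩
          · exact absurd ⟨y, hy, hyd⟩ h
        have hsetconst : ∀ x, s < x → x < d → {y | y ∈ E ∧ x < y} = {y | y ∈ E ∧ s < y} := by
          intro x hsx hxd
          ext y
          simp only [Set.mem_setOf_eq]
          constructor
          · rintro ⟨hyE, hxy⟩
            exact ⟨hyE, hsx.trans hxy⟩
          · rintro ⟨hyE, hsy⟩
            refine ⟨hyE, ?_⟩
            rcases lt_or_ge y d with h | h
            · exact absurd (hEs y hyE h) (not_le.2 hsy)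
            · exact hxd.trans_le h
        obtain ⟨hu₀E, hsu₀⟩ := hu s (hsd.trans hd)
        set u₀ := sInf {y | y ∈ E ∧ s < y} with hu₀def
        have hdu₀ : d ≤ u₀ := by
          by_contra h
          push_neg at h
          exact absurd (hEs u₀ hu₀E h) (not_le.2 hsu₀)
        have hu₀l : u₀ < l := hEclub.1 hu₀E
        obtain ⟨e, he, hmono⟩ := (hF u₀ hu₀l).2 d
          (by rw [Ordinal.add_one_eq_succ]; exact Order.lt_succ_iff.2 hdu₀) hdcof
        refine ⟨e ∩ Set.Ioi s, clubIn_tail hdlim he hsd, ?_⟩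
        intro x hx y hy hxy
        have hxd : x < d := he.1 hx.1
        have hyd : y < d := he.1 hy.1
        have hxE : x ∉ E := fun h => absurd hx.2 (hEs x h hxd).not_gt
        have hyE : y ∉ E := fun h => absurd hy.2 (hEs y h hyd).not_gt
        beta_reduce
        rw [if_neg hxE, if_neg hyE, hsetconst x hx.2 hxd, hsetconst y hy.2 hyd, ← hu₀def]
        exact hmono hx.1 hy.1 hxy


/-- `λ` weakly reflects at `κ` iff the cardinal `|λ|` weakly reflects at `κ`. -/
theorem stmt1 (k : Cardinal) (hk : k.IsRegular) (hk2 : Cardinal.aleph0 < k)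
    (l : Ordinal) (hl : k.ord < l) :
    WRefl l k ↔ WRefl l.card.ord k := by
  rw [wrefl_iff_not_snr, wrefl_iff_not_snr]
  apply not_congr
  constructor
  · intro h
    exact snr_mono h (ord_card_le l)
  · intro h
    exact main_ind k hk l.card.ord h l (by rw [card_ord])
end

section
/- Let κ be regular uncountable, λ > κ a cardinal such that λ weakly reflects at κ. Suppose g : λ → κ and for each α < λ, g(α) is the supremum of a nonempty set G_α ⊆ κ with |G_α| < κ. If g is constant on a stationary subset S of some δ ∈ S^λ_κ, then any function f : λ → κ with f(α) ∈ G_α for all α is bounded on S (by the constant value of g plus 1), hence f is not strictly increasing on any club of δ. -/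
open Set Cardinal

theorem cof_le_of_cofinal' {o : Ordinal} {s : Set Ordinal} (h1 : s ⊆ Set.Iio o)
    (h2 : ∀ b < o, ∃ x ∈ s, b ≤ x) :
    Cardinal.lift.{1,0} o.cof ≤ Cardinal.mk ↥s := by
  classical
  set e := (Ordinal.ToType.mk (o := o)) with he
  set s' : Set o.ToType := {y | (e.symm y : Ordinal) ∈ s} with hs'
  have hub : Set.Unbounded (· < ·) s' := by
    intro a
    obtain ⟨x, hxs, hx⟩ := h2 (e.symm a) (e.symm a).2
    refine ⟨e ⟨x, h1 hxs⟩, by simp [hs', hxs], fun h => absurd ?_ (not_lt.2 hx)⟩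
    have := e.symm.lt_iff_lt.2 h
    simpa using (Subtype.coe_lt_coe.2 this)
  have hcof : o.cof ≤ Cardinal.mk ↥s' := by
    rw [← Ordinal.cof_toType]
    exact Order.cof_le (fun a => let ⟨b, hb, hn⟩ := hub a; ⟨b, hb, not_lt.1 hn⟩)
  have hmk : Cardinal.lift.{0,1} (Cardinal.mk ↥s) = Cardinal.lift.{1,0} (Cardinal.mk ↥s') := by
    rw [Cardinal.lift_mk_eq']
    exact ⟨{ toFun := fun x => ⟨e ⟨x.1, h1 x.2⟩, by simp [hs', x.2]⟩
             invFun := fun y => ⟨e.symm y.1, y.2⟩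
             left_inv := fun x => by simp
             right_inv := fun y => by simp }⟩
  calc Cardinal.lift.{1,0} o.cof ≤ Cardinal.lift.{1,0} (Cardinal.mk ↥s') :=
        Cardinal.lift_le.2 hcof
    _ = Cardinal.lift.{0,1} (Cardinal.mk ↥s) := hmk.symm
    _ = Cardinal.mk ↥s := Cardinal.lift_id' _

/-- Core of preservation of weak reflection by `κ`-cc forcing: if `g α = sup G_α`
(`G_α ⊆ κ` nonempty of size `< κ`) is constant `= c` on a stationary `S ⊆ δ`, then any
choice function `f α ∈ G_α` is bounded by `c` on `S`, hence not strictly increasing on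
any club of `δ`. -/
theorem stmt10 (k : Cardinal) (hk : k.IsRegular) (hk2 : Cardinal.aleph0 < k)
    (l : Ordinal) (hl : k.ord < l) (hlc : l.card.ord = l) (hwr : WRefl l k)
    (G : Ordinal → Set Ordinal) (g : Ordinal → Ordinal)
    (hG1 : ∀ a < l, (G a).Nonempty) (hG2 : ∀ a < l, G a ⊆ Set.Iio k.ord)
    (hG3 : ∀ a < l, Cardinal.mk ↥(G a) < Cardinal.lift.{1,0} k)
    (hg : ∀ a < l, g a = sSup (G a))
    (d : Ordinal) (hd1 : d < l) (hd2 : d.cof = k)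
    (S : Set Ordinal) (hS : StatIn S d) (c : Ordinal) (hc : ∀ a ∈ S, g a = c) :
    ∀ f : Ordinal → Ordinal, (∀ a < l, f a ∈ G a) →
      (∀ a ∈ S, f a ≤ c) ∧ ∀ e, ClubIn e d → ¬ StrictMonoOn f e := by
  
  intro f hf
  have hfb : ∀ a ∈ S, f a ≤ c := by
    intro a ha
    have hal : a < l := lt_trans (hS.1 ha) hd1
    have hbdd : BddAbove (G a) := ⟨k.ord, fun x hx => (hG2 a hal hx).le⟩
    have := le_csSup hbdd (hf a hal)
    rwa [← hg a hal, hc a ha] at this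
  refine ⟨hfb, ?_⟩
  intro e he hmono
  have hclub : ClubIn (Set.Iio d) d :=
    ⟨subset_rfl, fun b hb => ⟨b, hb, le_rfl⟩, fun b hb _ _ => hb⟩
  obtain ⟨a0, ha0S, -⟩ := hS.2 _ hclub
  have ha0l : a0 < l := lt_trans (hS.1 ha0S) hd1
  have hck : c < k.ord := by
    rw [← hc a0 ha0S, hg a0 ha0l]
    by_contra hge
    push_neg at hge
    have hbdd : BddAbove (G a0) := ⟨k.ord, fun x hx => (hG2 a0 ha0l hx).le⟩
    have hsle : sSup (G a0) ≤ k.ord :=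
      csSup_le (hG1 a0 ha0l) (fun x hx => (hG2 a0 ha0l hx).le)
    have heq : sSup (G a0) = k.ord := le_antisymm hsle hge
    have hcof : ∀ b < k.ord, ∃ x ∈ G a0, b ≤ x := by
      intro b hb
      rw [← heq] at hb
      obtain ⟨x, hx, hbx⟩ := (lt_csSup_iff hbdd (hG1 a0 ha0l)).1 hb
      exact ⟨x, hx, hbx.le⟩
    have h := cof_le_of_cofinal' (hG2 a0 ha0l) hcof
    rw [hk.cof_eq] at h
    exact (hG3 a0 ha0l).not_ge h
  set T : Set Ordinal := S ∩ e with hT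
  have hTub : ∀ b < d, ∃ x ∈ T, b ≤ x := by
    intro b hb
    have hclub' : ClubIn (e ∩ Set.Ici b) d := by
      refine ⟨fun x hx => he.1 hx.1, ?_, ?_⟩
      · intro b' hb'
        obtain ⟨x, hx, hxx⟩ := he.2.1 (max b b') (max_lt hb hb')
        exact ⟨x, ⟨hx, (le_max_left _ _).trans hxx⟩, (le_max_right _ _).trans hxx⟩
      · intro b' hb' hne hsup
        obtain ⟨x, ⟨hxe, hxb⟩, hxlt⟩ := hne
        have h1 : (e ∩ Set.Iio b').Nonempty := ⟨x, hxe, hxlt⟩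
        have hbdd : BddAbove (e ∩ Set.Iio b') := ⟨b', fun y hy => hy.2.le⟩
        have hle : sSup (e ∩ Set.Iio b') ≤ b' := csSup_le h1 (fun y hy => hy.2.le)
        have hge : b' ≤ sSup (e ∩ Set.Iio b') := by
          conv_lhs => rw [← hsup]
          exact csSup_le_csSup hbdd ⟨x, ⟨hxe, hxb⟩, hxlt⟩
            (fun y hy => ⟨hy.1.1, hy.2⟩)
        exact ⟨he.2.2 b' hb' h1 (le_antisymm hle hge), Set.mem_Ici.2 ((Set.mem_Ici.1 hxb).trans hxlt.le)⟩
    obtain ⟨x, hxS, hxe, hxb⟩ := hS.2 _ hclub'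
    exact ⟨x, ⟨hxS, hxe⟩, hxb⟩
  have hTsub : T ⊆ Set.Iio d := fun x hx => hS.1 hx.1
  have h1 : Cardinal.lift.{1,0} k ≤ Cardinal.mk ↥T := by
    have := cof_le_of_cofinal' hTsub hTub
    rwa [hd2] at this
  have hsucc : c + 1 < k.ord := by
    rw [Ordinal.add_one_eq_succ]
    exact (Cardinal.isSuccLimit_ord hk.aleph0_le).succ_lt hck
  have h2 : Cardinal.mk ↥T ≤ Cardinal.mk ↥(Set.Iio (c + 1)) := by
    refine Cardinal.mk_le_of_injective
      (f := fun x : T => (⟨f x.1, by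
        rw [Ordinal.add_one_eq_succ]
        exact Order.lt_succ_iff.2 (hfb x.1 x.2.1)⟩ : Set.Iio (c + 1))) ?_
    intro x y hxy
    have : f x.1 = f y.1 := congrArg Subtype.val hxy
    exact Subtype.ext (hmono.injOn x.2.2 y.2.2 this)
  have h3 : Cardinal.mk ↥(Set.Iio (c + 1)) < Cardinal.lift.{1,0} k := by
    rw [Ordinal.mk_Iio_ordinal]
    exact Cardinal.lift_lt.2 (Cardinal.lt_ord.1 hsucc)
  exact absurd h1 (not_le.2 (h2.trans_lt h3))
end

section
/- Let κ < σ be regular uncountable cardinals and P(κ,σ) the strong non-reflection forcing. Let ⟨p_ξ : ξ < ζ⟩ be an increasing (under extension) sequence of conditions, where ζ < σ is a limit ordinal with cf(ζ) ≠ κ, such that sup of the domains, γ = sup_ξ dom(p_ξ), has cofinality ≠ κ. Then the union p = ⋃_ξ p_ξ is a condition in P(κ,σ). -/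
open Set Cardinal

/-- The strong non-reflection forcing `P(κ,σ)`: conditions are pairs `(α, p)` with
`α < σ.ord`, `p : α → κ.ord` (normalized to `0` off `α`), such that every `β < α` of
cofinality `κ` has a club on which `p` is strictly increasing. -/
def Pks (k s : Cardinal) : Set (Ordinal × (Ordinal → Ordinal)) :=
  {q | q.1 < s.ord ∧ (∀ a < q.1, q.2 a < k.ord) ∧ (∀ a, ¬ a < q.1 → q.2 a = 0) ∧
    ∀ b < q.1, b.cof = k → ∃ c, ClubIn c b ∧ StrictMonoOn q.2 c}

/-- The union of an increasing chain of conditions, of limit length `ζ < σ` with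
`cf ζ ≠ κ`, whose supremum of domains `γ` has cofinality `≠ κ`, is a condition. -/
theorem stmt14 (k s : Cardinal) (hk : k.IsRegular) (hk2 : Cardinal.aleph0 < k)
    (hs : s.IsRegular) (hs2 : Cardinal.aleph0 < s) (hks : k < s)
    (ζ : Ordinal) (hζ : ζ < s.ord) (hζl : Order.IsSuccLimit ζ) (hζc : ζ.cof ≠ k)
    (d : Ordinal → Ordinal) (F : Ordinal → Ordinal → Ordinal)
    (hmem : ∀ ξ < ζ, (d ξ, F ξ) ∈ Pks k s)
    (hmono : ∀ ξ < ζ, ∀ ξ', ξ ≤ ξ' → ξ' < ζ →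
      d ξ ≤ d ξ' ∧ ∀ a < d ξ, F ξ' a = F ξ a)
    (γ : Ordinal) (hγ : γ = sSup (d '' Set.Iio ζ)) (hγc : γ.cof ≠ k) :
    ∃ q ∈ Pks k s, q.1 = γ ∧ ∀ ξ < ζ, ∀ a < d ξ, q.2 a = F ξ a := by
  classical
  have hζ0 : (0 : Ordinal) < ζ := hζl.pos
  have hSne : (d '' Set.Iio ζ).Nonempty := ⟨d 0, ⟨0, hζ0, rfl⟩⟩
  have hbdd : BddAbove (d '' Set.Iio ζ) := by
    refine ⟨s.ord, ?_⟩
    rintro x ⟨ξ, hξ, rfl⟩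
    exact (hmem ξ hξ).1.le
  -- each d ξ ≤ γ
  have hdγ : ∀ ξ < ζ, d ξ ≤ γ := by
    intro ξ hξ
    rw [hγ]
    exact le_csSup hbdd ⟨ξ, hξ, rfl⟩
  -- γ < s.ord
  have hγs : γ < s.ord := by
    have h1 : γ ≤ Ordinal.bsup ζ (fun a _ => d a) := by
      rw [hγ]
      apply csSup_le hSne
      rintro x ⟨ξ, hξ, rfl⟩
      exact Ordinal.le_bsup _ ξ hξ
    refine lt_of_le_of_lt h1 (Ordinal.bsup_lt_ord ?_ ?_)
    · rw [hs.cof_eq]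
      exact Cardinal.lt_ord.mp hζ
    · intro i hi
      exact (hmem i hi).1
  -- every a < γ is below some d ξ
  have hex : ∀ a, a < γ → ∃ ξ, ξ < ζ ∧ a < d ξ := by
    intro a ha
    rw [hγ] at ha
    obtain ⟨x, hx, hax⟩ := (lt_csSup_iff hbdd hSne).mp ha
    obtain ⟨ξ, hξ, rfl⟩ := hx
    exact ⟨ξ, hξ, hax⟩
  -- the union function
  set G : Ordinal → Ordinal := fun a => if h : a < γ then F (hex a h).choose a else 0 with hGdef
  have hagree : ∀ ξ < ζ, ∀ a < d ξ, G a = F ξ a := by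
    intro ξ hξ a ha
    have haγ : a < γ := lt_of_lt_of_le ha (hdγ ξ hξ)
    have h := (hex a haγ).choose_spec
    show (if h : a < γ then F (hex a h).choose a else 0) = F ξ a
    rw [dif_pos haγ]
    rcases le_total ξ (hex a haγ).choose with hle | hle
    · exact (hmono ξ hξ _ hle h.1).2 a ha
    · exact ((hmono _ h.1 ξ hle hξ).2 a h.2).symm
  refine ⟨(γ, G), ⟨hγs, ?_, ?_, ?_⟩, rfl, fun ξ hξ a ha => hagree ξ hξ a ha⟩
  · intro a ha
    obtain ⟨ξ, hξ, haξ⟩ := hex a ha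
    show G a < k.ord
    rw [hagree ξ hξ a haξ]
    exact (hmem ξ hξ).2.1 a haξ
  · intro a ha
    exact dif_neg ha
  · intro b hb hbk
    obtain ⟨ξ, hξ, hbξ⟩ := hex b hb
    obtain ⟨c, hc, hcm⟩ := (hmem ξ hξ).2.2.2 b hbξ hbk
    refine ⟨c, hc, ?_⟩
    intro x hx y hy hxy
    have hxb : x < b := hc.1 hx
    have hyb : y < b := hc.1 hy
    show G x < G y
    rw [hagree ξ hξ x (hxb.trans hbξ), hagree ξ hξ y (hyb.trans hbξ)]
    exact hcm hx hy hxy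
end
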